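/- arXiv:math/0307245 — 2 statements merged into one kernel-verified Lean document; each statement's English description precedes it below -/
import Mathlib

section
/- Let 0 ≤ t₀ < t₁, c > 0, and let A : [t₀,t₁] → ℝ be continuous with A(t) ≥ 0 for all t, such that for every t ∈ [t₀,t₁) the upper Dini derivative D⁺A(t) = limsup_{h→0⁺} (A(t+h) − A(t))/h satisfies D⁺A(t) ≤ −2π + (3/(4(t+c)))·A(t). Then A(t₁)/(t₁+c) ≤ A(t₀)/(t₀+c) − 2π·(log(t₁+c) − log(t₀+c)). -/
open Filter

/-- The upper Dini derivative `D⁺A(t) = limsup_{h→0⁺} (A(t+h) − A(t))/h`, valued in `EReal`. -/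
noncomputable def upperDiniDeriv (A : ℝ → ℝ) (t : ℝ) : EReal :=
  Filter.limsup (fun h : ℝ => (((A (t + h) - A t) / h : ℝ) : EReal)) (nhdsWithin 0 (Set.Ioi 0))

/-- If `A ≥ 0` is continuous on `[t₀,t₁]` and satisfies
`D⁺A(t) ≤ −2π + (3/(4(t+c)))·A(t)` on `[t₀,t₁)`, then
`A(t₁)/(t₁+c) ≤ A(t₀)/(t₀+c) − 2π (log(t₁+c) − log(t₀+c))`. -/
theorem rescaled_area_decay
    (t₀ t₁ c : ℝ) (ht₀ : 0 ≤ t₀) (ht : t₀ < t₁) (hc : 0 < c)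
    (A : ℝ → ℝ)
    (hcont : ContinuousOn A (Set.Icc t₀ t₁))
    (hnonneg : ∀ t ∈ Set.Icc t₀ t₁, 0 ≤ A t)
    (hdini : ∀ t ∈ Set.Ico t₀ t₁,
      upperDiniDeriv A t ≤ ((-2 * Real.pi + 3 / (4 * (t + c)) * A t : ℝ) : EReal)) :
    A t₁ / (t₁ + c) ≤ A t₀ / (t₀ + c) - 2 * Real.pi * (Real.log (t₁ + c) - Real.log (t₀ + c)) := by
  set K : ℝ := A t₀ / (t₀ + c) with hK
  set L : ℝ := Real.log (t₀ + c) with hL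
  have ht₀c : (0:ℝ) < t₀ + c := by linarith
  have ht₁c : (0:ℝ) < t₁ + c := by linarith
  -- slope hypothesis from the Dini derivative bound
  have hf' : ∀ x ∈ Set.Ico t₀ t₁, ∀ r : ℝ,
      (-2 * Real.pi + 3 / (4 * (x + c)) * A x) < r →
      ∃ᶠ z in nhdsWithin x (Set.Ioi x), slope A x z < r := by
    intro x hx r hr
    have h1 : upperDiniDeriv A x < ((r : ℝ) : EReal) :=
      lt_of_le_of_lt (hdini x hx) (by exact_mod_cast hr)
    have h2 : ∀ᶠ h in nhdsWithin (0:ℝ) (Set.Ioi 0),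
        (((A (x + h) - A x) / h : ℝ) : EReal) < ((r : ℝ) : EReal) :=
      eventually_lt_of_limsup_lt h1
    have h3 : ∀ᶠ h in nhdsWithin (0:ℝ) (Set.Ioi 0), (A (x + h) - A x) / h < r :=
      h2.mono (fun h hh => by exact_mod_cast hh)
    have hmap : Filter.Tendsto (fun z : ℝ => z - x) (nhdsWithin x (Set.Ioi x))
        (nhdsWithin (0:ℝ) (Set.Ioi 0)) := by
      apply tendsto_nhdsWithin_of_tendsto_nhds_of_eventually_within
      · have : Filter.Tendsto (fun z : ℝ => z - x) (nhds x) (nhds (x - x)) :=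
          (continuous_id.sub continuous_const).tendsto x
        simpa using this.mono_left nhdsWithin_le_nhds
      · filter_upwards [self_mem_nhdsWithin] with z hz
        exact sub_pos.2 (Set.mem_Ioi.mp hz)
    have h4 : ∀ᶠ z in nhdsWithin x (Set.Ioi x), (A (x + (z - x)) - A x) / (z - x) < r :=
      hmap.eventually h3
    refine (h4.mono ?_).frequently
    intro z hz
    rw [slope_def_field]
    simpa using hz
  -- the barrier family
  have key : ∀ ε : ℝ, 0 < ε →
      A t₁ ≤ (t₁ + c) * (K - 2 * Real.pi * (Real.log (t₁ + c) - L)) + ε * (t₁ - t₀) := by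
    intro ε hε
    set B : ℝ → ℝ := fun t => (t + c) * (K - 2 * Real.pi * (Real.log (t + c) - L)) + ε * (t - t₀)
      with hB
    set B' : ℝ → ℝ := fun x =>
      (K - 2 * Real.pi * (Real.log (x + c) - L)) - 2 * Real.pi + ε with hB'
    have hderiv : ∀ x ∈ Set.Icc t₀ t₁, HasDerivAt B (B' x) x := by
      intro x hx
      have hxc : (0:ℝ) < x + c := by have := hx.1; linarith
      have h1 : HasDerivAt (fun t : ℝ => t + c) 1 x := (hasDerivAt_id x).add_const c
      have hlog : HasDerivAt (fun t : ℝ => Real.log (t + c)) (1 / (x + c)) x :=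
        h1.log hxc.ne'
      have h2 : HasDerivAt (fun t : ℝ => K - 2 * Real.pi * (Real.log (t + c) - L))
          (-(2 * Real.pi * (1 / (x + c)))) x :=
        (((hlog.sub_const L).const_mul (2 * Real.pi)).const_sub K)
      have h3 := h1.mul h2
      have h4 : HasDerivAt (fun t : ℝ => ε * (t - t₀)) (ε * 1) x :=
        ((hasDerivAt_id x).sub_const t₀).const_mul ε
      have h5 := h3.add h4
      refine h5.congr_deriv ?_
      rw [hB']
      field_simp
      ring
    have hBcont : ContinuousOn B (Set.Icc t₀ t₁) :=
      fun x hx => (hderiv x hx).continuousAt.continuousWithinAt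
    have ha : A t₀ ≤ B t₀ := by
      rw [hB, hK, hL]
      have : (t₀ + c) * (A t₀ / (t₀ + c) - 2 * Real.pi * (Real.log (t₀ + c) - Real.log (t₀ + c)))
          + ε * (t₀ - t₀) = A t₀ := by
        field_simp
        ring
      linarith [this.ge]
    have bound : ∀ x ∈ Set.Ico t₀ t₁, A x = B x →
        (-2 * Real.pi + 3 / (4 * (x + c)) * A x) < B' x := by
      intro x hx hcontact
      have hxc : (0:ℝ) < x + c := by have := hx.1; linarith
      have hAx : 0 ≤ A x := hnonneg x ⟨hx.1, hx.2.le⟩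
      have hcontact' : A x = (x + c) * (K - 2 * Real.pi * (Real.log (x + c) - L))
          + ε * (x - t₀) := hcontact
      have hKx : K - 2 * Real.pi * (Real.log (x + c) - L) = (A x - ε * (x - t₀)) / (x + c) := by
        rw [eq_div_iff hxc.ne']
        linear_combination -hcontact'
      show -2 * Real.pi + 3 / (4 * (x + c)) * A x
          < K - 2 * Real.pi * (Real.log (x + c) - L) - 2 * Real.pi + ε
      rw [hKx]
      have hsub : 3 / (4 * (x + c)) * A x - ((A x - ε * (x - t₀)) / (x + c) + ε)
          = -(A x + 4 * ε * (c + t₀)) / (4 * (x + c)) := by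
        field_simp
        ring
      have hneg : -(A x + 4 * ε * (c + t₀)) / (4 * (x + c)) < 0 := by
        apply div_neg_of_neg_of_pos
        · nlinarith
        · linarith
      nlinarith [hsub, hneg]
    have := image_le_of_liminf_slope_right_lt_deriv_boundary' hcont hf' ha hBcont
      (fun x hx => (hderiv x ⟨hx.1, hx.2.le⟩).hasDerivWithinAt) bound
      (Set.right_mem_Icc.2 ht.le)
    simpa [hB] using this
  -- let ε → 0
  have hfin : A t₁ ≤ (t₁ + c) * (K - 2 * Real.pi * (Real.log (t₁ + c) - L)) := by
    apply le_of_forall_pos_le_add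
    intro ε hε
    have h := key (ε / (t₁ - t₀)) (div_pos hε (by linarith))
    have : ε / (t₁ - t₀) * (t₁ - t₀) = ε := div_mul_cancel₀ ε (sub_ne_zero.2 ht.ne')
    linarith [h, this.le, this.ge]
  rw [div_le_iff₀ ht₁c]
  rw [hK, hL] at hfin
  linarith [hfin, mul_comm (t₁ + c)
    (A t₀ / (t₀ + c) - 2 * Real.pi * (Real.log (t₁ + c) - Real.log (t₀ + c)))]
end

section
/- Let t₀ < t₁, λ > 0, K ≥ 0, m ≥ 0. Let v : [t₀,t₁] × ℝ → ℝ be continuous, periodic in the second variable with period λ, with ∂v/∂t, ∂v/∂x and ∂²v/∂x² existing and continuous, and suppose that pointwise ∂v/∂t ≤ ∂²v/∂x² + b·∂v/∂x + a·v + c, where a, b, c are continuous functions with a(t,x) ≤ K and c(t,x) ≤ K everywhere. If v(t₀,x) ≤ m for all x, then v(t,x) ≤ (m+1)·e^{K(t−t₀)} − 1 for all t ∈ [t₀,t₁] and all x. -/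
open Topology Filter

/-- Second derivative test: at a global maximum, the second derivative is nonpositive. -/
lemma aux_second_deriv_nonpos (f f' : ℝ → ℝ) (f'' x : ℝ)
    (hf : ∀ y, HasDerivAt f (f' y) y)
    (hf' : HasDerivAt f' f'' x)
    (hmax : ∀ y, f y ≤ f x) : f'' ≤ 0 := by
  by_contra hpos
  push_neg at hpos
  have hfx : f' x = 0 := by
    have hloc : IsLocalMax f x := Filter.Eventually.of_forall hmax
    exact hloc.hasDerivAt_eq_zero (hf x)
  have hslope := hasDerivAt_iff_tendsto_slope.mp hf'
  have hev : ∀ᶠ y in 𝓝[≠] x, f'' / 2 < slope f' x y :=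
    hslope.eventually (eventually_gt_nhds (by linarith))
  have hev2 : ∀ᶠ y in 𝓝[>] x, 0 < f' y := by
    have hle : 𝓝[Set.Ioi x] x ≤ 𝓝[{x}ᶜ] x :=
      nhdsWithin_mono x (fun y hy => ne_of_gt hy)
    filter_upwards [hev.filter_mono hle, eventually_mem_nhdsWithin] with y hy hy'
    have hyx : 0 < y - x := sub_pos.2 hy'
    have : 0 < slope f' x y := lt_trans (by linarith) hy
    rw [slope_def_field] at this
    have := mul_pos this hyx
    rw [div_mul_cancel₀] at this
    · simpa [hfx] using this
    · exact ne_of_gt hyx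
  obtain ⟨u, hu, hsub⟩ := mem_nhdsGT_iff_exists_Ioo_subset.mp hev2
  have hmono : StrictMonoOn f (Set.Icc x u) := by
    apply strictMonoOn_of_deriv_pos (convex_Icc x u)
    · exact fun y _ => (hf y).continuousAt.continuousWithinAt
    · intro y hy
      rw [interior_Icc] at hy
      rw [(hf y).deriv]
      exact hsub hy
  have : f x < f u :=
    hmono (Set.left_mem_Icc.2 (le_of_lt hu)) (Set.right_mem_Icc.2 (le_of_lt hu)) hu
  exact absurd (hmax u) (not_le.2 this)

/-- At a right-endpoint maximum, the (within-)derivative is nonnegative. -/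
lemma aux_deriv_nonneg_at_right_max (g : ℝ → ℝ) (g' t₀ ts : ℝ) (h : t₀ < ts)
    (hg : HasDerivWithinAt g g' (Set.Icc t₀ ts) ts)
    (hle : ∀ t ∈ Set.Icc t₀ ts, g t ≤ g ts) : 0 ≤ g' := by
  have hs := hasDerivWithinAt_iff_tendsto_slope.mp hg
  have hsubset : Set.Ico t₀ ts ⊆ Set.Icc t₀ ts \ {ts} :=
    fun y hy => ⟨⟨hy.1, le_of_lt hy.2⟩, ne_of_lt hy.2⟩
  have hne : (𝓝[Set.Icc t₀ ts \ {ts}] ts).NeBot :=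
    (right_nhdsWithin_Ico_neBot h).mono (nhdsWithin_mono ts hsubset)
  refine ge_of_tendsto hs ?_
  apply eventually_nhdsWithin_of_forall
  intro t htmem
  have ht1 : t ∈ Set.Icc t₀ ts := htmem.1
  have ht2 : t < ts := lt_of_le_of_ne ht1.2 htmem.2
  rw [slope_def_field]
  have hnum : g t - g ts ≤ 0 := sub_nonpos.2 (hle t ht1)
  have hden : t - ts < 0 := sub_neg.2 ht2
  have heq : (g t - g ts) / (t - ts) = (g ts - g t) / (ts - t) := by
    rw [← neg_sub (g ts), ← neg_sub ts, neg_div_neg_eq]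
  rw [heq]
  exact div_nonneg (by linarith) (by linarith)

/-- Parabolic maximum principle on the circle (boundedness of the curvature of ramp solutions):
if `∂v/∂t ≤ ∂²v/∂x² + b·∂v/∂x + a·v + c` with `a ≤ K`, `c ≤ K`, `v` is `λ`-periodic in `x`, and
`v(t₀,·) ≤ m`, then `v(t,x) ≤ (m+1)·e^{K(t−t₀)} − 1` on `[t₀,t₁]`. -/
theorem parabolic_maximum_principle_circle
    (t₀ t₁ lam K m : ℝ) (ht : t₀ < t₁) (hlam : 0 < lam) (hK : 0 ≤ K) (hm : 0 ≤ m)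
    (v vt vx vxx a b c : ℝ → ℝ → ℝ)
    (hv_cont : ContinuousOn (fun p : ℝ × ℝ => v p.1 p.2) (Set.Icc t₀ t₁ ×ˢ Set.univ))
    (hper : ∀ t ∈ Set.Icc t₀ t₁, ∀ x : ℝ, v t (x + lam) = v t x)
    (hvt : ∀ t ∈ Set.Icc t₀ t₁, ∀ x : ℝ,
      HasDerivWithinAt (fun s => v s x) (vt t x) (Set.Icc t₀ t₁) t)
    (hvx : ∀ t ∈ Set.Icc t₀ t₁, ∀ x : ℝ, HasDerivAt (fun y => v t y) (vx t x) x)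
    (hvxx : ∀ t ∈ Set.Icc t₀ t₁, ∀ x : ℝ, HasDerivAt (fun y => vx t y) (vxx t x) x)
    (hvt_cont : ContinuousOn (fun p : ℝ × ℝ => vt p.1 p.2) (Set.Icc t₀ t₁ ×ˢ Set.univ))
    (hvx_cont : ContinuousOn (fun p : ℝ × ℝ => vx p.1 p.2) (Set.Icc t₀ t₁ ×ˢ Set.univ))
    (hvxx_cont : ContinuousOn (fun p : ℝ × ℝ => vxx p.1 p.2) (Set.Icc t₀ t₁ ×ˢ Set.univ))
    (ha_cont : ContinuousOn (fun p : ℝ × ℝ => a p.1 p.2) (Set.Icc t₀ t₁ ×ˢ Set.univ))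
    (hb_cont : ContinuousOn (fun p : ℝ × ℝ => b p.1 p.2) (Set.Icc t₀ t₁ ×ˢ Set.univ))
    (hc_cont : ContinuousOn (fun p : ℝ × ℝ => c p.1 p.2) (Set.Icc t₀ t₁ ×ˢ Set.univ))
    (ha_ub : ∀ t ∈ Set.Icc t₀ t₁, ∀ x : ℝ, a t x ≤ K)
    (hc_ub : ∀ t ∈ Set.Icc t₀ t₁, ∀ x : ℝ, c t x ≤ K)
    (hpde : ∀ t ∈ Set.Icc t₀ t₁, ∀ x : ℝ,
      vt t x ≤ vxx t x + b t x * vx t x + a t x * v t x + c t x)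
    (hinit : ∀ x : ℝ, v t₀ x ≤ m) :
    ∀ t ∈ Set.Icc t₀ t₁, ∀ x : ℝ, v t x ≤ (m + 1) * Real.exp (K * (t - t₀)) - 1 := by
  -- periodicity
  have hperiodic : ∀ t ∈ Set.Icc t₀ t₁, Function.Periodic (v t) lam := fun t ht' => hper t ht'
  -- the key ε-perturbed estimate
  suffices hkey : ∀ ε : ℝ, 0 < ε → ∀ t ∈ Set.Icc t₀ t₁, ∀ x : ℝ,
      v t x ≤ (m + 1 + ε) * Real.exp ((K + ε) * (t - t₀)) - 1 by
    intro t ht' x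
    have hcont : Continuous fun ε : ℝ => (m + 1 + ε) * Real.exp ((K + ε) * (t - t₀)) - 1 := by
      refine Continuous.sub (Continuous.mul (continuous_const.add continuous_id) ?_) continuous_const
      exact Real.continuous_exp.comp ((continuous_const.add continuous_id).mul continuous_const)
    have htend : Filter.Tendsto (fun ε : ℝ => (m + 1 + ε) * Real.exp ((K + ε) * (t - t₀)) - 1)
        (𝓝[>] (0:ℝ)) (𝓝 ((m + 1) * Real.exp (K * (t - t₀)) - 1)) := by
      have := hcont.tendsto 0
      simp only [add_zero] at this
      exact this.mono_left nhdsWithin_le_nhds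
    refine ge_of_tendsto htend ?_
    exact eventually_nhdsWithin_of_forall fun ε hε => hkey ε hε t ht' x
  intro ε hε
  by_contra hcon
  push_neg at hcon
  set Φ : ℝ → ℝ := fun t => (m + 1 + ε) * Real.exp ((K + ε) * (t - t₀)) with hΦdef
  -- the compact "bad" set and its projection
  set C : Set (ℝ × ℝ) := (Set.Icc t₀ t₁ ×ˢ Set.Icc 0 lam) ∩
      {p : ℝ × ℝ | Φ p.1 - 1 ≤ v p.1 p.2} with hCdef
  have hΦcont : Continuous Φ := by
    refine Continuous.mul continuous_const ?_
    exact Real.continuous_exp.comp (continuous_const.mul (continuous_id.sub continuous_const))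
  have hCclosed : IsClosed C := by
    have hcont : ContinuousOn (fun p : ℝ × ℝ => v p.1 p.2 - (Φ p.1 - 1))
        (Set.Icc t₀ t₁ ×ˢ Set.Icc 0 lam) := by
      apply ContinuousOn.sub
      · exact hv_cont.mono (Set.prod_mono_right (Set.subset_univ _))
      · exact ((hΦcont.comp continuous_fst).sub continuous_const).continuousOn
    have hset : C = (Set.Icc t₀ t₁ ×ˢ Set.Icc 0 lam) ∩
        (fun p : ℝ × ℝ => v p.1 p.2 - (Φ p.1 - 1)) ⁻¹' Set.Ici 0 := by
      ext p
      simp only [hCdef, Set.mem_inter_iff, Set.mem_setOf_eq, Set.mem_preimage, Set.mem_Ici,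
        sub_nonneg]
    rw [hset]
    exact hcont.preimage_isClosed_of_isClosed
      ((isCompact_Icc.prod isCompact_Icc)).isClosed isClosed_Ici
  have hCcomp : IsCompact C :=
    (isCompact_Icc.prod isCompact_Icc).of_isClosed_subset hCclosed Set.inter_subset_left
  set A : Set ℝ := Prod.fst '' C with hAdef
  have hAcomp : IsCompact A := hCcomp.image continuous_fst
  -- A is nonempty
  obtain ⟨t, ht', x, hx⟩ := hcon
  have hAne : A.Nonempty := by
    obtain ⟨y, hy, hEq⟩ := (hperiodic t ht').exists_mem_Ico₀ hlam x
    refine ⟨t, ⟨(t, y), ⟨⟨ht', Set.Ico_subset_Icc_self hy⟩, ?_⟩, rfl⟩⟩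
    simp only [Set.mem_setOf_eq]
    rw [hEq] at hx
    exact le_of_lt hx
  set ts : ℝ := sInf A with htsdef
  have htsA : ts ∈ A := hAcomp.isClosed.csInf_mem hAne hAcomp.bddBelow
  obtain ⟨p, hpC, hp1⟩ := htsA
  have hts' : ts ∈ Set.Icc t₀ t₁ := hp1 ▸ hpC.1.1
  have hxsA : ∃ z ∈ Set.Icc 0 lam, Φ ts - 1 ≤ v ts z := by
    refine ⟨p.2, hpC.1.2, ?_⟩
    have h2 := hpC.2
    simp only [Set.mem_setOf_eq] at h2
    rw [hp1] at h2
    exact h2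
  -- ts > t₀
  have hΦt₀ : Φ t₀ = m + 1 + ε := by simp [hΦdef]
  have htlt : t₀ < ts := by
    rcases lt_or_eq_of_le hts'.1 with h | h
    · exact h
    · exfalso
      obtain ⟨z, _, hz⟩ := hxsA
      rw [← h, hΦt₀] at hz
      have := hinit z
      linarith
  -- maximum point in space
  have hvcontx : ContinuousOn (v ts) (Set.Icc 0 lam) :=
    fun y _ => (hvx ts hts' y).continuousAt.continuousWithinAt
  obtain ⟨xs, hxs, hmaxOn⟩ := isCompact_Icc.exists_isMaxOn
    ⟨0, Set.left_mem_Icc.2 (le_of_lt hlam)⟩ hvcontx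
  have hgmax : ∀ y, v ts y ≤ v ts xs := by
    intro y
    obtain ⟨y', hy', hEq⟩ := (hperiodic ts hts').exists_mem_Ico₀ hlam y
    rw [hEq]
    exact hmaxOn (Set.Ico_subset_Icc_self hy')
  have hge : Φ ts - 1 ≤ v ts xs := by
    obtain ⟨z, hz, hz'⟩ := hxsA
    exact le_trans hz' (hmaxOn hz)
  -- before time ts, v is strictly below the barrier
  have hbefore : ∀ t ∈ Set.Ico t₀ ts, v t xs < Φ t - 1 := by
    intro t htm
    by_contra hcontra
    push_neg at hcontra
    have htIcc : t ∈ Set.Icc t₀ t₁ := ⟨htm.1, le_trans (le_of_lt htm.2) hts'.2⟩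
    have htA : t ∈ A := ⟨(t, xs), ⟨⟨htIcc, hxs⟩, hcontra⟩, rfl⟩
    exact absurd (csInf_le hAcomp.bddBelow htA) (not_le.2 htm.2)
  -- equality at ts by continuity from the left
  have hle : v ts xs ≤ Φ ts - 1 := by
    have hcw : ContinuousWithinAt (fun t => v t xs - (Φ t - 1)) (Set.Ico t₀ ts) ts := by
      apply ContinuousWithinAt.sub
      · exact ((hvt ts hts' xs).continuousWithinAt).mono
          (fun y hy => ⟨hy.1, le_trans (le_of_lt hy.2) hts'.2⟩)
      · exact (hΦcont.continuousWithinAt).sub continuousWithinAt_const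
    have hnb : (𝓝[Set.Ico t₀ ts] ts).NeBot := right_nhdsWithin_Ico_neBot htlt
    have : v ts xs - (Φ ts - 1) ≤ 0 := by
      refine le_of_tendsto hcw ?_
      exact eventually_nhdsWithin_of_forall fun t htm => by linarith [hbefore t htm]
    linarith
  have hveq : v ts xs = Φ ts - 1 := le_antisymm hle hge
  -- time derivative at ts is ≥ (K+ε)·Φ ts
  have hΦderiv : HasDerivAt Φ ((K + ε) * Φ ts) ts := by
    have h1 : HasDerivAt (fun t : ℝ => (K + ε) * (t - t₀)) (K + ε) ts := by
      simpa using ((hasDerivAt_id ts).sub_const t₀).const_mul (K + ε)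
    have h2 := h1.exp
    have h3 := h2.const_mul (m + 1 + ε)
    convert h3 using 1
    show (K + ε) * ((m + 1 + ε) * Real.exp ((K + ε) * (ts - t₀))) = _
    ring
    all_goals rfl
  have hgderiv : HasDerivWithinAt (fun t => v t xs - Φ t + 1)
      (vt ts xs - (K + ε) * Φ ts) (Set.Icc t₀ ts) ts := by
    have hG : HasDerivWithinAt (fun t => v t xs) (vt ts xs) (Set.Icc t₀ ts) ts :=
      (hvt ts hts' xs).mono (Set.Icc_subset_Icc le_rfl hts'.2)
    exact (hG.sub hΦderiv.hasDerivWithinAt).add_const 1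
  have hgmax' : ∀ t ∈ Set.Icc t₀ ts, (fun t => v t xs - Φ t + 1) t ≤
      (fun t => v t xs - Φ t + 1) ts := by
    intro t htm
    simp only []
    rcases lt_or_eq_of_le htm.2 with h | h
    · have := hbefore t ⟨htm.1, h⟩
      linarith [hveq]
    · rw [h]
  have hdt : 0 ≤ vt ts xs - (K + ε) * Φ ts :=
    aux_deriv_nonneg_at_right_max _ _ _ _ htlt hgderiv hgmax'
  -- spatial derivatives at xs
  have hvx0 : vx ts xs = 0 := by
    have hloc : IsLocalMax (v ts) xs := Filter.Eventually.of_forall hgmax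
    exact hloc.hasDerivAt_eq_zero (hvx ts hts' xs)
  have hvxx0 : vxx ts xs ≤ 0 :=
    aux_second_deriv_nonpos (v ts) (vx ts) (vxx ts xs) xs
      (fun y => hvx ts hts' y) (hvxx ts hts' xs) hgmax
  -- assemble the contradiction
  have hΦpos : 0 < Φ ts := by
    apply mul_pos (by linarith) (Real.exp_pos _)
  have hexp1 : 1 ≤ Real.exp ((K + ε) * (ts - t₀)) :=
    Real.one_le_exp (mul_nonneg (by linarith) (by linarith [hts'.1]))
  have hΦge : m + 1 + ε ≤ Φ ts := by
    have := mul_le_mul_of_nonneg_left hexp1 (by linarith : (0:ℝ) ≤ m + 1 + ε)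
    simpa [hΦdef] using this
  have hV0 : 0 ≤ v ts xs := by rw [hveq]; linarith
  have hpde' := hpde ts hts' xs
  rw [hvx0, mul_zero, add_zero] at hpde'
  have hav : a ts xs * v ts xs ≤ K * v ts xs :=
    mul_le_mul_of_nonneg_right (ha_ub ts hts' xs) hV0
  have hcK := hc_ub ts hts' xs
  have e1 : (K + ε) * Φ ts = K * Φ ts + ε * Φ ts := by ring
  have e2 : K * v ts xs = K * Φ ts - K := by rw [hveq]; ring
  have hεΦ : 0 < ε * Φ ts := mul_pos hε hΦpos
  linarith
end
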